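/- arXiv:1511.08768 — 2 statements merged into one kernel-verified Lean document; each statement's English description precedes it below -/
import Mathlib

section
/- Let f : ℝⁿ → ℝ be twice continuously differentiable, let x ∈ ℝⁿ, δ > 0, let a₁, …, aₘ ∈ ℝⁿ, and suppose the operator norm of the Hessian of f is bounded by H on the closed ball of radius δ·(Σⱼ‖aⱼ‖₂) around x. Then for every sign vector Δ ∈ {−1,1}ᵐ and every index i ∈ {1,…,m}, |(f(x + δ·ΣⱼΔⱼaⱼ) − f(x))/(δΔᵢ) − ⟨∇f(x), aᵢ⟩ − Σ_{j≠i} ΔⱼΔᵢ·⟨∇f(x), aⱼ⟩| ≤ (H·δ/2)·(Σⱼ‖aⱼ‖₂)². -/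
open scoped RealInnerProductSpace

lemma taylor2_bound {E : Type*} [NormedAddCommGroup E] [InnerProductSpace ℝ E]
    {f : E → ℝ} (hf : ContDiff ℝ 2 f) {x v : E} {H r : ℝ} (hvr : ‖v‖ ≤ r)
    (hH : ∀ y ∈ Metric.closedBall x r, ‖fderiv ℝ (fderiv ℝ f) y‖ ≤ H) :
    |f (x + v) - f x - fderiv ℝ f x v| ≤ H / 2 * ‖v‖ ^ 2 := by
  have hr0 : (0:ℝ) ≤ r := le_trans (norm_nonneg v) hvr
  have hxball : x ∈ Metric.closedBall x r := Metric.mem_closedBall_self hr0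
  have hH0 : 0 ≤ H := le_trans (norm_nonneg (fderiv ℝ (fderiv ℝ f) x)) (hH x hxball)
  have hf1 : ContDiff ℝ 1 (fderiv ℝ f) := hf.fderiv_right (le_refl 2)
  have hfd : Differentiable ℝ f := hf.differentiable two_ne_zero
  -- derivative of g t = f (x + t • v)
  have hg : ∀ t : ℝ, HasDerivAt (fun t : ℝ => f (x + t • v)) (fderiv ℝ f (x + t • v) v) t := by
    intro t
    have h1 : HasDerivAt (fun t : ℝ => x + t • v) v t := by
      simpa using ((hasDerivAt_id t).smul_const v).const_add x
    exact ((hfd (x + t • v)).hasFDerivAt.comp_hasDerivAt t h1)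
  -- bound on the variation of the derivative along the segment
  have key : ∀ t ∈ Set.Icc (0:ℝ) 1,
      |fderiv ℝ f (x + t • v) v - fderiv ℝ f x v| ≤ H * ‖v‖ ^ 2 * t := by
    intro t ht
    have hmem : x + t • v ∈ Metric.closedBall x r := by
      simp only [Metric.mem_closedBall, dist_eq_norm, add_sub_cancel_left, norm_smul,
        Real.norm_eq_abs, abs_of_nonneg ht.1]
      calc t * ‖v‖ ≤ 1 * ‖v‖ := by nlinarith [norm_nonneg v, ht.2]
        _ ≤ r := by simpa using hvr
    have hmvt : ‖fderiv ℝ f (x + t • v) - fderiv ℝ f x‖ ≤ H * ‖x + t • v - x‖ :=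
      (convex_closedBall x r).norm_image_sub_le_of_norm_fderiv_le
        (fun y _ => (hf1.differentiable one_ne_zero) y) hH hxball hmem
    have h2 : |fderiv ℝ f (x + t • v) v - fderiv ℝ f x v|
        ≤ ‖fderiv ℝ f (x + t • v) - fderiv ℝ f x‖ * ‖v‖ := by
      have := (fderiv ℝ f (x + t • v) - fderiv ℝ f x).le_opNorm v
      simpa [Real.norm_eq_abs] using this
    have h3 : ‖x + t • v - x‖ = t * ‖v‖ := by
      simp [norm_smul, Real.norm_eq_abs, abs_of_nonneg ht.1]
    rw [h3] at hmvt
    calc |fderiv ℝ f (x + t • v) v - fderiv ℝ f x v|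
        ≤ ‖fderiv ℝ f (x + t • v) - fderiv ℝ f x‖ * ‖v‖ := h2
      _ ≤ H * (t * ‖v‖) * ‖v‖ := mul_le_mul_of_nonneg_right hmvt (norm_nonneg v)
      _ = H * ‖v‖ ^ 2 * t := by ring
  set c : ℝ := fderiv ℝ f x v with hc
  set K : ℝ := H * ‖v‖ ^ 2 with hK
  have hK0 : 0 ≤ K := by positivity
  -- upper bound via antitone φ
  have upper : f (x + v) - f x - c ≤ K / 2 := by
    have hφ : ∀ t : ℝ, HasDerivAt (fun t : ℝ => f (x + t • v) - t * c - K / 2 * t ^ 2)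
        (fderiv ℝ f (x + t • v) v - c - K * t) t := by
      intro t
      have := ((hg t).sub ((hasDerivAt_id t).mul_const c)).sub
        (((hasDerivAt_pow 2 t)).const_mul (K / 2))
      refine this.congr_deriv ?_
      norm_num
      ring
    have hanti : AntitoneOn (fun t : ℝ => f (x + t • v) - t * c - K / 2 * t ^ 2)
        (Set.Icc 0 1) := by
      apply antitoneOn_of_deriv_nonpos (convex_Icc 0 1)
      · exact fun t _ => ((hφ t).continuousAt).continuousWithinAt
      · exact fun t ht => ((hφ t).differentiableAt).differentiableWithinAt
      · intro t ht
        rw [interior_Icc] at ht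
        rw [(hφ t).deriv]
        have := key t ⟨le_of_lt ht.1, le_of_lt ht.2⟩
        have := abs_le.1 this
        linarith [this.2]
    have := hanti (Set.left_mem_Icc.2 zero_le_one) (Set.right_mem_Icc.2 zero_le_one) zero_le_one
    simp only [zero_smul, add_zero, zero_mul, one_smul, one_mul, one_pow,
      mul_one, sub_zero, mul_zero] at this
    linarith
  have lower : -(K / 2) ≤ f (x + v) - f x - c := by
    have hφ : ∀ t : ℝ, HasDerivAt (fun t : ℝ => f (x + t • v) - t * c + K / 2 * t ^ 2)
        (fderiv ℝ f (x + t • v) v - c + K * t) t := by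
      intro t
      have := ((hg t).sub ((hasDerivAt_id t).mul_const c)).add
        (((hasDerivAt_pow 2 t)).const_mul (K / 2))
      refine this.congr_deriv ?_
      norm_num
      ring
    have hmono : MonotoneOn (fun t : ℝ => f (x + t • v) - t * c + K / 2 * t ^ 2)
        (Set.Icc 0 1) := by
      apply monotoneOn_of_deriv_nonneg (convex_Icc 0 1)
      · exact fun t _ => ((hφ t).continuousAt).continuousWithinAt
      · exact fun t ht => ((hφ t).differentiableAt).differentiableWithinAt
      · intro t ht
        rw [interior_Icc] at ht
        rw [(hφ t).deriv]
        have := abs_le.1 (key t ⟨le_of_lt ht.1, le_of_lt ht.2⟩)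
        linarith [this.1]
    have := hmono (Set.left_mem_Icc.2 zero_le_one) (Set.right_mem_Icc.2 zero_le_one) zero_le_one
    simp only [zero_smul, add_zero, zero_mul, one_smul, one_mul, one_pow,
      mul_one, sub_zero, mul_zero] at this
    linarith
  rw [abs_le]
  constructor <;> [skip; skip] <;> simp only [hK] at upper lower <;> nlinarith

/-- Deterministic error bound for the simultaneous perturbation
measurement of the linear functionals `⟨∇f(x), aᵢ⟩`: if the Hessian of `f` has
operator norm at most `H` on the closed ball of radius `δ·∑ⱼ‖aⱼ‖₂` around `x`,
then for every sign vector `Δ ∈ {-1,1}ᵐ` and index `i`,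
`|(f(x + δ∑ⱼΔⱼaⱼ) - f(x))/(δΔᵢ) - ⟨∇f(x), aᵢ⟩ - ∑_{j≠i} ΔⱼΔᵢ⟨∇f(x), aⱼ⟩|
  ≤ (Hδ/2)·(∑ⱼ‖aⱼ‖₂)²`. -/
theorem stmt_3 (n m : ℕ) (f : EuclideanSpace ℝ (Fin n) → ℝ) (hf : ContDiff ℝ 2 f)
    (x : EuclideanSpace ℝ (Fin n)) (δ H : ℝ) (hδ : 0 < δ)
    (a : Fin m → EuclideanSpace ℝ (Fin n))
    (hH : ∀ y ∈ Metric.closedBall x (δ * ∑ j, ‖a j‖),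
      ‖fderiv ℝ (fderiv ℝ f) y‖ ≤ H)
    (Δ : Fin m → ℝ) (hΔ : ∀ j, Δ j = 1 ∨ Δ j = -1) (i : Fin m) :
    abs ((f (x + δ • ∑ j, Δ j • a j) - f x) / (δ * Δ i) -
        ⟪gradient f x, a i⟫ -
        ∑ j ∈ Finset.univ.erase i, Δ j * Δ i * ⟪gradient f x, a j⟫) ≤
      H * δ / 2 * (∑ j, ‖a j‖) ^ 2 := by
  set v : EuclideanSpace ℝ (Fin n) := δ • ∑ j, Δ j • a j with hv
  set r : ℝ := δ * ∑ j, ‖a j‖ with hr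
  have hΔabs : ∀ j, |Δ j| = 1 := fun j => by rcases hΔ j with h | h <;> simp [h]
  have hΔsq : ∀ j, Δ j * Δ j = 1 := fun j => by rcases hΔ j with h | h <;> simp [h] <;> ring
  have hΔne : Δ i ≠ 0 := fun h => by simpa [h] using hΔabs i
  have hvr : ‖v‖ ≤ r := by
    rw [hv, hr, norm_smul, Real.norm_eq_abs, abs_of_pos hδ]
    refine mul_le_mul_of_nonneg_left ?_ hδ.le
    calc ‖∑ j, Δ j • a j‖ ≤ ∑ j, ‖Δ j • a j‖ := norm_sum_le _ _
      _ = ∑ j, ‖a j‖ := by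
          refine Finset.sum_congr rfl fun j _ => ?_
          rw [norm_smul, Real.norm_eq_abs, hΔabs j, one_mul]
  have hr0 : (0:ℝ) ≤ r := le_trans (norm_nonneg v) hvr
  have hH0 : 0 ≤ H := le_trans (norm_nonneg (fderiv ℝ (fderiv ℝ f) x)) (hH x (Metric.mem_closedBall_self hr0))
  have hgrad : ∀ y : EuclideanSpace ℝ (Fin n), ⟪gradient f x, y⟫ = fderiv ℝ f x y :=
    fun y => InnerProductSpace.toDual_symm_apply
  have hkey : |f (x + v) - f x - fderiv ℝ f x v| ≤ H / 2 * ‖v‖ ^ 2 :=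
    taylor2_bound hf hvr hH
  set c : Fin m → ℝ := fun j => fderiv ℝ f x (a j) with hc
  have hLv : fderiv ℝ f x v = δ * ∑ j, Δ j * c j := by
    rw [hv, map_smul, map_sum]
    simp [hc, smul_eq_mul]
  have hsplit : δ * ∑ j, Δ j * c j
      = (δ * Δ i) * (c i + ∑ j ∈ Finset.univ.erase i, Δ j * Δ i * c j) := by
    rw [← Finset.add_sum_erase _ (fun j => Δ j * c j) (Finset.mem_univ i),
      mul_add, mul_add, Finset.mul_sum, Finset.mul_sum]
    congr 1
    · ring
    · refine Finset.sum_congr rfl fun j _ => ?_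
      ring_nf
      rw [show Δ i ^ 2 = 1 by rw [sq]; exact hΔsq i]
      ring
  have heq : (f (x + v) - f x) / (δ * Δ i) -
        ⟪gradient f x, a i⟫ -
        ∑ j ∈ Finset.univ.erase i, Δ j * Δ i * ⟪gradient f x, a j⟫
      = (f (x + v) - f x - fderiv ℝ f x v) / (δ * Δ i) := by
    simp only [hgrad]
    rw [hLv, hsplit]
    have hd : δ * Δ i ≠ 0 := mul_ne_zero hδ.ne' hΔne
    field_simp
    ring
  rw [heq, abs_div, abs_mul, abs_of_pos hδ, hΔabs i, mul_one]
  rw [div_le_iff₀ hδ]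
  calc |f (x + v) - f x - fderiv ℝ f x v| ≤ H / 2 * ‖v‖ ^ 2 := hkey
    _ ≤ H / 2 * r ^ 2 := by
        refine mul_le_mul_of_nonneg_left ?_ (by positivity)
        exact pow_le_pow_left₀ (norm_nonneg v) hvr 2
    _ = H * δ / 2 * (∑ j, ‖a j‖) ^ 2 * δ := by rw [hr]; ring
end

section
/- (Conditional form of the main gradient-estimation theorem.) Let f : ℝⁿ → ℝ be continuously differentiable and x ∈ ℝⁿ. Let A be an m×n real matrix (m ≥ 2) with rows a₁,…,aₘ, and let t > 0, τ > 0. Assume A has the robust ℓ1-recovery property at ∇f(x): for every y ∈ ℝᵐ with ‖A∇f(x) − y‖₂ ≤ t, every minimizer ẑ of ‖z‖₁ over {z ∈ ℝⁿ : ‖Az − y‖₂ ≤ t} satisfies ‖ẑ − ∇f(x)‖₂ ≤ 2t/τ. Let δ > 0, C ≥ maxᵢ|⟨∇f(x), aᵢ⟩|, and K ≥ 0 be such that for every Δ ∈ {−1,1}ᵐ and every i, |(f(x + δΣⱼΔⱼaⱼ) − f(x))/(δΔᵢ) − ⟨∇f(x), aᵢ⟩ − Σ_{j≠i}ΔⱼΔᵢ⟨∇f(x),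 aⱼ⟩| ≤ Kδ. Suppose t > 2mKδ, 0 < ε < 1, and k ≥ (8m²(m−1)C²/t²)·log(2/ε). Let Δ¹,…,Δᵏ be independent uniform random vectors on {−1,1}ᵐ and let ȳ ∈ ℝᵐ have coordinates ȳᵢ = (1/k)Σ_{l=1}^{k}(f(x + δΣⱼΔⱼˡaⱼ) − f(x))/(δΔᵢˡ). Then with probability at least 1 − εm, every minimizer ∇̃f of ‖z‖₁ over {z : ‖Az − ȳ‖₂ ≤ t} satisfies ‖∇̃f − ∇f(x)‖₂ ≤ 2t/τ. -/
open scoped RealInnerProductSpace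
lemma mgf_eq {ι : Type*} [Fintype ι] [DecidableEq ι] (c : ι → ℝ) :
    ∑ η : ι → Bool, Real.exp (∑ i, (if η i then (1:ℝ) else -1) * c i)
      = ∏ i, (Real.exp (c i) + Real.exp (-c i)) := by
  have : ∀ η : ι → Bool, Real.exp (∑ i, (if η i then (1:ℝ) else -1) * c i)
      = ∏ i, Real.exp ((if η i then (1:ℝ) else -1) * c i) := by
    intro η; rw [Real.exp_sum]
  simp_rw [this]
  have h2 := Fintype.prod_sum (ι := ι) (κ := fun _ => Bool)
    (fun i b => Real.exp ((if b then (1:ℝ) else -1) * c i))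
  rw [← h2]
  apply Finset.prod_congr rfl
  intro i _
  rw [Fintype.sum_bool]
  simp

lemma chernoff_count {ι : Type*} [Fintype ι] [DecidableEq ι] (c : ι → ℝ) (a V : ℝ)
    (ha : 0 < a) (hV : 0 < V) (hc : ∑ i, c i ^ 2 ≤ V) :
    ((Finset.univ.filter fun η : ι → Bool =>
        a ≤ ∑ i, (if η i then (1:ℝ) else -1) * c i).card : ℝ) ≤
      2 ^ (Fintype.card ι) * Real.exp (-(a ^ 2) / (2 * V)) := by
  set L := a / V with hLdef
  have hL0 : 0 < L := div_pos ha hV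
  -- step 1 : Markov
  have markov : ((Finset.univ.filter fun η : ι → Bool =>
        a ≤ ∑ i, (if η i then (1:ℝ) else -1) * c i).card : ℝ) * Real.exp (L * a)
      ≤ ∑ η : ι → Bool, Real.exp (L * ∑ i, (if η i then (1:ℝ) else -1) * c i) := by
    have h1 := Finset.card_nsmul_le_sum
      (Finset.univ.filter fun η : ι → Bool =>
        a ≤ ∑ i, (if η i then (1:ℝ) else -1) * c i)
      (fun η => Real.exp (L * ∑ i, (if η i then (1:ℝ) else -1) * c i))
      (Real.exp (L * a))
      (fun η hη => Real.exp_le_exp.2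
        (mul_le_mul_of_nonneg_left (Finset.mem_filter.1 hη).2 hL0.le))
    rw [nsmul_eq_mul] at h1
    refine h1.trans ?_
    apply Finset.sum_le_sum_of_subset_of_nonneg (Finset.filter_subset _ _)
    intro i _ _; positivity
  -- step 2 : mgf bound
  have mgfb : ∑ η : ι → Bool, Real.exp (L * ∑ i, (if η i then (1:ℝ) else -1) * c i)
      ≤ 2 ^ (Fintype.card ι) * Real.exp (L ^ 2 * V / 2) := by
    have e1 : ∀ η : ι → Bool, L * ∑ i, (if η i then (1:ℝ) else -1) * c i
        = ∑ i, (if η i then (1:ℝ) else -1) * (L * c i) := by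
      intro η; rw [Finset.mul_sum]; apply Finset.sum_congr rfl; intro i _; ring
    simp_rw [e1]
    rw [mgf_eq (fun i => L * c i)]
    have e2 : ∀ i : ι, Real.exp (L * c i) + Real.exp (-(L * c i))
        ≤ 2 * Real.exp ((L * c i) ^ 2 / 2) := by
      intro i
      have := Real.cosh_le_exp_half_sq (L * c i)
      rw [Real.cosh_eq] at this
      linarith
    calc ∏ i, (Real.exp (L * c i) + Real.exp (-(L * c i)))
        ≤ ∏ i, (2 * Real.exp ((L * c i) ^ 2 / 2)) := by
          apply Finset.prod_le_prod
          · intro i _; positivity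
          · intro i _; exact e2 i
      _ = 2 ^ (Fintype.card ι) * Real.exp (∑ i, (L * c i) ^ 2 / 2) := by
          rw [Finset.prod_mul_distrib, Finset.prod_const, Real.exp_sum]
          simp [Finset.card_univ]
      _ ≤ 2 ^ (Fintype.card ι) * Real.exp (L ^ 2 * V / 2) := by
          have : ∑ i, (L * c i) ^ 2 / 2 = L ^ 2 / 2 * ∑ i, c i ^ 2 := by
            rw [Finset.mul_sum]; apply Finset.sum_congr rfl; intro i _; ring
          rw [this]
          apply mul_le_mul_of_nonneg_left (Real.exp_le_exp.2 ?_) (by positivity)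
          nlinarith [hL0.le]
  -- combine
  have hexp : (0:ℝ) < Real.exp (L * a) := Real.exp_pos _
  have final : ((Finset.univ.filter fun η : ι → Bool =>
        a ≤ ∑ i, (if η i then (1:ℝ) else -1) * c i).card : ℝ)
      ≤ 2 ^ (Fintype.card ι) * Real.exp (L ^ 2 * V / 2) / Real.exp (L * a) :=
    (le_div_iff₀ hexp).2 (markov.trans mgfb)
  refine final.trans (le_of_eq ?_)
  rw [div_eq_mul_inv, ← Real.exp_neg, mul_assoc, ← Real.exp_add]
  congr 2
  have hVne : V ≠ 0 := hV.ne'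
  rw [hLdef]
  field_simp
  ring

lemma chernoff_abs {ι : Type*} [Fintype ι] [DecidableEq ι] (c : ι → ℝ) (a V : ℝ)
    (ha : 0 < a) (hV : 0 < V) (hc : ∑ i, c i ^ 2 ≤ V)
    (hch : ∀ c' : ι → ℝ, (∑ i, c' i ^ 2 ≤ V) →
      ((Finset.univ.filter fun η : ι → Bool =>
        a ≤ ∑ i, (if η i then (1:ℝ) else -1) * c' i).card : ℝ) ≤
      2 ^ (Fintype.card ι) * Real.exp (-(a ^ 2) / (2 * V))) :
    ((Finset.univ.filter fun η : ι → Bool =>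
        a ≤ |∑ i, (if η i then (1:ℝ) else -1) * c i|).card : ℝ) ≤
      2 * 2 ^ (Fintype.card ι) * Real.exp (-(a ^ 2) / (2 * V)) := by
  have hsub : (Finset.univ.filter fun η : ι → Bool =>
        a ≤ |∑ i, (if η i then (1:ℝ) else -1) * c i|) ⊆
      (Finset.univ.filter fun η : ι → Bool =>
        a ≤ ∑ i, (if η i then (1:ℝ) else -1) * c i) ∪
      (Finset.univ.filter fun η : ι → Bool =>
        a ≤ ∑ i, (if η i then (1:ℝ) else -1) * (-c i)) := by
    intro η hη
    rw [Finset.mem_filter] at hη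
    rcases le_abs.1 hη.2 with h | h
    · exact Finset.mem_union_left _ (Finset.mem_filter.2 ⟨Finset.mem_univ _, h⟩)
    · refine Finset.mem_union_right _ (Finset.mem_filter.2 ⟨Finset.mem_univ _, ?_⟩)
      calc a ≤ -∑ i, (if η i then (1:ℝ) else -1) * c i := h
        _ = ∑ i, (if η i then (1:ℝ) else -1) * (-c i) := by
            rw [← Finset.sum_neg_distrib]
            exact Finset.sum_congr rfl fun i _ => by ring
  have h1 := hch c hc
  have h2 := hch (fun i => -c i) (by simpa using hc)
  have hcard : ((Finset.univ.filter fun η : ι → Bool =>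
        a ≤ |∑ i, (if η i then (1:ℝ) else -1) * c i|).card : ℝ) ≤
      ((Finset.univ.filter fun η : ι → Bool =>
        a ≤ ∑ i, (if η i then (1:ℝ) else -1) * c i).card : ℝ) +
      ((Finset.univ.filter fun η : ι → Bool =>
        a ≤ ∑ i, (if η i then (1:ℝ) else -1) * (-c i)).card : ℝ) := by
    have := (Finset.card_le_card hsub).trans (Finset.card_union_le _ _)
    exact_mod_cast this
  calc ((Finset.univ.filter fun η : ι → Bool =>
        a ≤ |∑ i, (if η i then (1:ℝ) else -1) * c i|).card : ℝ)
      ≤ _ + _ := hcard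
    _ ≤ 2 ^ (Fintype.card ι) * Real.exp (-(a ^ 2) / (2 * V)) +
        2 ^ (Fintype.card ι) * Real.exp (-(a ^ 2) / (2 * V)) := add_le_add h1 h2
    _ = 2 * 2 ^ (Fintype.card ι) * Real.exp (-(a ^ 2) / (2 * V)) := by ring

lemma card_filter_equiv {α β : Type*} [Fintype α] [Fintype β] [DecidableEq α] [DecidableEq β]
    (e : α ≃ β) (p : β → Prop) [DecidablePred p] :
    (Finset.univ.filter fun x : α => p (e x)).card = (Finset.univ.filter p).card := by
  rw [← Fintype.card_subtype, ← Fintype.card_subtype]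
  exact Fintype.card_congr (e.subtypeEquiv fun x => Iff.rfl)

def flipT {k m : ℕ} (i : Fin m) (σ : Fin k → Fin m → Bool) : Fin k → Fin m → Bool :=
  fun l j => if j = i then σ l i else (σ l j == σ l i)

lemma flipT_invol {k m : ℕ} (i : Fin m) : Function.Involutive (flipT (k := k) i) := by
  intro σ
  funext l j
  by_cases h : j = i
  · subst h; simp [flipT]
  · simp only [flipT, if_neg h]
    cases hj : σ l j <;> cases hi : σ l i <;> simp [hj, hi]

lemma flipT_sign {k m : ℕ} (i : Fin m) (σ : Fin k → Fin m → Bool) (l : Fin k) (j : Fin m)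
    (h : j ≠ i) :
    (if flipT i σ l j then (1:ℝ) else -1) =
      (if σ l j then (1:ℝ) else -1) * (if σ l i then (1:ℝ) else -1) := by
  simp only [flipT, if_neg h]
  cases hj : σ l j <;> cases hi : σ l i <;> norm_num

lemma card_filter_invol {α : Type*} [Fintype α] [DecidableEq α] (f : α → α)
    (h : Function.Involutive f) (p : α → Prop) [DecidablePred p] :
    (Finset.univ.filter fun x : α => p (f x)).card = (Finset.univ.filter p).card := by
  rw [← Fintype.card_subtype, ← Fintype.card_subtype]
  exact Fintype.card_congr ((h.toPerm f).subtypeEquiv fun x => Iff.rfl)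

lemma count_bad_le {k m : ℕ} (i : Fin m) (g : Fin m → ℝ) (aa V : ℝ)
    (haa : 0 < aa) (hV : 0 < V)
    (hc : (k:ℝ) * ∑ j ∈ Finset.univ.erase i, g j ^ 2 ≤ V) :
    ((Finset.univ.filter fun σ : Fin k → Fin m → Bool =>
        aa ≤ |∑ l, ∑ j ∈ Finset.univ.erase i,
          (if σ l j then (1:ℝ) else -1) * (if σ l i then (1:ℝ) else -1) * g j|).card : ℝ)
      ≤ 2 * 2 ^ (k * m) * Real.exp (-(aa ^ 2) / (2 * V)) := by
  classical
  set c : Fin m → ℝ := fun j => if j = i then 0 else g j with hcdef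
  -- step 1 : use the involution to replace the product of signs by a single sign
  have step1 : (Finset.univ.filter fun σ : Fin k → Fin m → Bool =>
        aa ≤ |∑ l, ∑ j ∈ Finset.univ.erase i,
          (if σ l j then (1:ℝ) else -1) * (if σ l i then (1:ℝ) else -1) * g j|).card
      = (Finset.univ.filter fun σ : Fin k → Fin m → Bool =>
        aa ≤ |∑ l, ∑ j, (if σ l j then (1:ℝ) else -1) * c j|).card := by
    rw [← card_filter_invol (flipT i) (flipT_invol i)
      (fun σ => aa ≤ |∑ l, ∑ j, (if σ l j then (1:ℝ) else -1) * c j|)]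
    refine congrArg Finset.card ?_
    apply Finset.filter_congr
    intro σ _
    have : ∀ l : Fin k, ∑ j, (if flipT i σ l j then (1:ℝ) else -1) * c j
        = ∑ j ∈ Finset.univ.erase i,
          (if σ l j then (1:ℝ) else -1) * (if σ l i then (1:ℝ) else -1) * g j := by
      intro l
      have h0 : (if flipT i σ l i then (1:ℝ) else -1) * c i = 0 := by simp [hcdef]
      rw [← Finset.sum_erase_add _ _ (Finset.mem_univ i), h0, add_zero]
      apply Finset.sum_congr rfl
      intro j hj
      have hji : j ≠ i := Finset.ne_of_mem_erase hj
      rw [flipT_sign i σ l j hji]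
      simp [hcdef, hji]
    simp_rw [this]
  rw [step1]
  -- step 2 : curry
  have step2 : (Finset.univ.filter fun σ : Fin k → Fin m → Bool =>
        aa ≤ |∑ l, ∑ j, (if σ l j then (1:ℝ) else -1) * c j|).card
      = (Finset.univ.filter fun τ : Fin k × Fin m → Bool =>
        aa ≤ |∑ p : Fin k × Fin m, (if τ p then (1:ℝ) else -1) * c p.2|).card := by
    rw [← card_filter_equiv ((Equiv.curry (Fin k) (Fin m) Bool).symm)
      (fun τ => aa ≤ |∑ p : Fin k × Fin m, (if τ p then (1:ℝ) else -1) * c p.2|)]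
    refine congrArg Finset.card ?_
    apply Finset.filter_congr
    intro σ _
    rw [Fintype.sum_prod_type]
    rfl
  rw [step2]
  -- step 3 : chernoff
  have hcsum : ∑ p : Fin k × Fin m, (c p.2) ^ 2 ≤ V := by
    have e1 : ∑ p : Fin k × Fin m, (c p.2) ^ 2 = ∑ _x : Fin k, ∑ j, c j ^ 2 :=
      Fintype.sum_prod_type _
    have e2 : ∑ j, c j ^ 2 = ∑ j ∈ Finset.univ.erase i, g j ^ 2 := by
      have h0 : c i ^ 2 = 0 := by simp [hcdef]
      rw [← Finset.sum_erase_add _ _ (Finset.mem_univ i), h0, add_zero]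
      apply Finset.sum_congr rfl
      intro j hj
      simp [hcdef, Finset.ne_of_mem_erase hj]
    rw [e1, e2, Finset.sum_const, Finset.card_univ, Fintype.card_fin, nsmul_eq_mul]
    exact hc
  have := chernoff_abs (fun p : Fin k × Fin m => c p.2) aa V haa hV hcsum
    (fun c' h => chernoff_count c' aa V haa hV h)
  simpa [Fintype.card_prod, Fintype.card_fin] using this

lemma count_good {k m : ℕ} (hm : 2 ≤ m) (hk1 : 1 ≤ k) (g : Fin m → ℝ) (C t ε : ℝ)
    (hC : ∀ i, |g i| ≤ C) (hC0 : 0 < C) (ht0 : 0 < t) (hε0 : 0 < ε) (hε1 : ε < 1)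
    (hk : (k:ℝ) ≥ 8 * (m:ℝ) ^ 2 * ((m:ℝ) - 1) * C ^ 2 / t ^ 2 * Real.log (2 / ε)) :
    (1 - ε * m) * 2 ^ (k * m) ≤
      ((Finset.univ.filter fun σ : Fin k → Fin m → Bool =>
        ∀ i, |∑ l, ∑ j ∈ Finset.univ.erase i,
          (if σ l j then (1:ℝ) else -1) * (if σ l i then (1:ℝ) else -1) * g j|
          ≤ (k:ℝ) * t / (2 * m)).card : ℝ) := by
  classical
  have hm1 : (1:ℝ) ≤ (m:ℝ) := by exact_mod_cast Nat.one_le_of_lt hm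
  have hm2 : (2:ℝ) ≤ (m:ℝ) := by exact_mod_cast hm
  have hm0 : (0:ℝ) < m := by linarith
  have hmm1 : (0:ℝ) < (m:ℝ) - 1 := by linarith
  have hk0 : (0:ℝ) < k := by exact_mod_cast hk1
  set aa := (k:ℝ) * t / (2 * m) with haadef
  set V := (k:ℝ) * ((m:ℝ) - 1) * C ^ 2 with hVdef
  have haa : 0 < aa := by positivity
  have hV : 0 < V := by positivity
  -- the exponential bound
  have hL0 : 0 < Real.log (2 / ε) := Real.log_pos (by rw [lt_div_iff₀ hε0]; linarith)
  have hexpo : Real.log (2 / ε) ≤ aa ^ 2 / (2 * V) := by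
    have e : aa ^ 2 / (2 * V) = (k:ℝ) * (t ^ 2 / (8 * (m:ℝ) ^ 2 * ((m:ℝ) - 1) * C ^ 2)) := by
      rw [haadef, hVdef]
      field_simp
      ring
    rw [e]
    rw [ge_iff_le, div_mul_eq_mul_div, div_le_iff₀ (by positivity)] at hk
    have h2 : Real.log (2 / ε) ≤ (k:ℝ) * t ^ 2 / (8 * (m:ℝ) ^ 2 * ((m:ℝ) - 1) * C ^ 2) :=
      (le_div_iff₀ (by positivity)).2 (by nlinarith)
    calc Real.log (2 / ε) ≤ (k:ℝ) * t ^ 2 / (8 * (m:ℝ) ^ 2 * ((m:ℝ) - 1) * C ^ 2) := h2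
      _ = (k:ℝ) * (t ^ 2 / (8 * (m:ℝ) ^ 2 * ((m:ℝ) - 1) * C ^ 2)) := by ring
  have hexp : Real.exp (-(aa ^ 2) / (2 * V)) ≤ ε / 2 := by
    have hlog : Real.log (ε / 2) = -Real.log (2 / ε) := by
      rw [← Real.log_inv, inv_div]
    have : -(aa ^ 2) / (2 * V) ≤ Real.log (ε / 2) := by
      rw [hlog, neg_div]
      linarith
    calc Real.exp (-(aa ^ 2) / (2 * V)) ≤ Real.exp (Real.log (ε / 2)) := Real.exp_le_exp.2 this
      _ = ε / 2 := Real.exp_log (by positivity)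
  -- per-coordinate bad-set bound
  have hbad : ∀ i : Fin m, ((Finset.univ.filter fun σ : Fin k → Fin m → Bool =>
      aa ≤ |∑ l, ∑ j ∈ Finset.univ.erase i,
        (if σ l j then (1:ℝ) else -1) * (if σ l i then (1:ℝ) else -1) * g j|).card : ℝ)
      ≤ ε * 2 ^ (k * m) := by
    intro i
    have hc : (k:ℝ) * ∑ j ∈ Finset.univ.erase i, g j ^ 2 ≤ V := by
      rw [hVdef]
      have : ∑ j ∈ Finset.univ.erase i, g j ^ 2 ≤ ((m:ℝ) - 1) * C ^ 2 := by
        have hcard : (Finset.univ.erase i).card = m - 1 := by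
          rw [Finset.card_erase_of_mem (Finset.mem_univ i), Finset.card_univ, Fintype.card_fin]
        calc ∑ j ∈ Finset.univ.erase i, g j ^ 2 ≤ ∑ _j ∈ Finset.univ.erase i, C ^ 2 := by
              apply Finset.sum_le_sum
              intro j _
              calc g j ^ 2 = |g j| ^ 2 := (sq_abs _).symm
                _ ≤ C ^ 2 := by
                    apply pow_le_pow_left₀ (abs_nonneg _) (hC j)
          _ = ((m:ℝ) - 1) * C ^ 2 := by
              rw [Finset.sum_const, hcard, nsmul_eq_mul]
              congr 1
              have : (1:ℕ) ≤ m := Nat.one_le_of_lt hm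
              push_cast [Nat.cast_sub this]
              ring
      calc (k:ℝ) * ∑ j ∈ Finset.univ.erase i, g j ^ 2 ≤ (k:ℝ) * (((m:ℝ) - 1) * C ^ 2) := by
            apply mul_le_mul_of_nonneg_left this (by positivity)
        _ = (k:ℝ) * ((m:ℝ) - 1) * C ^ 2 := by ring
    calc ((Finset.univ.filter fun σ : Fin k → Fin m → Bool =>
        aa ≤ |∑ l, ∑ j ∈ Finset.univ.erase i,
          (if σ l j then (1:ℝ) else -1) * (if σ l i then (1:ℝ) else -1) * g j|).card : ℝ)
        ≤ 2 * 2 ^ (k * m) * Real.exp (-(aa ^ 2) / (2 * V)) := count_bad_le i g aa V haa hV hc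
      _ ≤ 2 * 2 ^ (k * m) * (ε / 2) := by
          apply mul_le_mul_of_nonneg_left hexp (by positivity)
      _ = ε * 2 ^ (k * m) := by ring
  -- union bound
  set Q : (Fin k → Fin m → Bool) → Prop := fun σ =>
    ∀ i, |∑ l, ∑ j ∈ Finset.univ.erase i,
      (if σ l j then (1:ℝ) else -1) * (if σ l i then (1:ℝ) else -1) * g j| ≤ aa with hQdef
  have hsub : (Finset.univ.filter fun σ => ¬ Q σ) ⊆
      Finset.univ.biUnion (fun i : Fin m => Finset.univ.filter
        fun σ : Fin k → Fin m → Bool =>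
          aa ≤ |∑ l, ∑ j ∈ Finset.univ.erase i,
            (if σ l j then (1:ℝ) else -1) * (if σ l i then (1:ℝ) else -1) * g j|) := by
    intro σ hσ
    simp only [Finset.mem_filter, hQdef, not_forall, not_le] at hσ
    obtain ⟨i, hi⟩ := hσ.2
    exact Finset.mem_biUnion.2 ⟨i, Finset.mem_univ _,
      Finset.mem_filter.2 ⟨Finset.mem_univ _, hi.le⟩⟩
  have hnegcard : ((Finset.univ.filter fun σ => ¬ Q σ).card : ℝ) ≤ ε * m * 2 ^ (k * m) := by
    have h1 : ((Finset.univ.filter fun σ => ¬ Q σ).card : ℝ) ≤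
        ∑ i : Fin m, ((Finset.univ.filter fun σ : Fin k → Fin m → Bool =>
          aa ≤ |∑ l, ∑ j ∈ Finset.univ.erase i,
            (if σ l j then (1:ℝ) else -1) * (if σ l i then (1:ℝ) else -1) * g j|).card : ℝ) := by
      have := (Finset.card_le_card hsub).trans (Finset.card_biUnion_le)
      exact_mod_cast this
    calc ((Finset.univ.filter fun σ => ¬ Q σ).card : ℝ) ≤ _ := h1
      _ ≤ ∑ _i : Fin m, ε * 2 ^ (k * m) := Finset.sum_le_sum fun i _ => hbad i
      _ = ε * m * 2 ^ (k * m) := by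
          rw [Finset.sum_const, Finset.card_univ, Fintype.card_fin, nsmul_eq_mul]
          ring
  have hcardΩ : (Fintype.card (Fin k → Fin m → Bool)) = 2 ^ (k * m) := by
    rw [Fintype.card_fun, Fintype.card_fun, Fintype.card_bool, Fintype.card_fin,
      Fintype.card_fin, ← pow_mul, mul_comm]
  have hsplit := Finset.card_filter_add_card_filter_not
    (s := (Finset.univ : Finset (Fin k → Fin m → Bool))) (p := Q)
  rw [Finset.card_univ, hcardΩ] at hsplit
  have hsplit' : ((Finset.univ.filter Q).card : ℝ) +
      ((Finset.univ.filter fun σ => ¬ Q σ).card : ℝ) = 2 ^ (k * m) := by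
    exact_mod_cast hsplit
  have : (1 - ε * m) * 2 ^ (k * m) ≤ ((Finset.univ.filter Q).card : ℝ) := by nlinarith
  exact this

lemma norm_le_of_coord {m : ℕ} (hm : 2 ≤ m) (u v : Fin m → ℝ) (t : ℝ) (ht0 : 0 < t)
    (h : ∀ i, |u i - v i| ≤ t / m) :
    ‖(WithLp.equiv 2 (Fin m → ℝ)).symm u - (WithLp.equiv 2 (Fin m → ℝ)).symm v‖ ≤ t := by
  have hm0 : (0:ℝ) < m := by positivity
  have hm1 : (1:ℝ) ≤ m := by exact_mod_cast Nat.one_le_of_lt hm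
  rw [EuclideanSpace.norm_eq]
  have key : ∑ i, ‖((WithLp.equiv 2 (Fin m → ℝ)).symm u - (WithLp.equiv 2 (Fin m → ℝ)).symm v) i‖ ^ 2 ≤ t ^ 2 := by
    have e : ∀ i : Fin m, ‖((WithLp.equiv 2 (Fin m → ℝ)).symm u - (WithLp.equiv 2 (Fin m → ℝ)).symm v) i‖ ^ 2
        = |u i - v i| ^ 2 := by
      intro i
      simp [WithLp.equiv_symm_apply, Real.norm_eq_abs]
    calc ∑ i, ‖((WithLp.equiv 2 (Fin m → ℝ)).symm u - (WithLp.equiv 2 (Fin m → ℝ)).symm v) i‖ ^ 2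
        = ∑ i, |u i - v i| ^ 2 := Finset.sum_congr rfl fun i _ => e i
      _ ≤ ∑ _i : Fin m, (t / m) ^ 2 := Finset.sum_le_sum fun i _ =>
          pow_le_pow_left₀ (abs_nonneg _) (h i) 2
      _ = m * (t / m) ^ 2 := by rw [Finset.sum_const, Finset.card_univ, Fintype.card_fin, nsmul_eq_mul]
      _ ≤ t ^ 2 := by
          rw [div_pow]
          calc (m:ℝ) * (t^2 / (m:ℝ)^2) = t^2 / m := by field_simp
            _ ≤ t ^ 2 := by
                rw [div_le_iff₀ hm0]
                nlinarith [sq_nonneg t, hm1]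
  calc Real.sqrt (∑ i, ‖((WithLp.equiv 2 (Fin m → ℝ)).symm u - (WithLp.equiv 2 (Fin m → ℝ)).symm v) i‖ ^ 2)
      ≤ Real.sqrt (t ^ 2) := Real.sqrt_le_sqrt key
    _ = t := Real.sqrt_sq ht0.le

set_option maxHeartbeats 1000000 in
/-- Conditional form of the main gradient-estimation theorem:
if the measurement matrix `A` (with rows `a₁, …, aₘ`, acting by
`(Az)ᵢ = ⟨aᵢ, z⟩`) has the robust `l1`-recovery property at `∇f(x)` with
parameters `t, τ`, the simultaneous perturbation remainder is bounded by `Kδ`,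
`|⟨∇f(x), aᵢ⟩| ≤ C`, `t > 2mKδ`, `0 < ε < 1`, and
`k ≥ (8m²(m-1)C²/t²)·log(2/ε)`, then with probability at least `1 - εm` over the
independent uniform sign vectors `Δ¹, …, Δᵏ` on `{-1,1}ᵐ` (encoded by
`σ : Fin k → Fin m → Bool`, sign `if · then 1 else -1`, probabilities being
cardinalities divided by `2^(k·m)`), every minimizer of `‖z‖₁` over
`{z : ‖Az - ȳ‖₂ ≤ t}` — where `ȳ` is the vector of averaged SP measurements —
is within `2t/τ` of `∇f(x)`. -/
theorem stmt_7 (n m k : ℕ) (hm : 2 ≤ m)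
    (f : EuclideanSpace ℝ (Fin n) → ℝ) (hf : ContDiff ℝ 1 f)
    (x : EuclideanSpace ℝ (Fin n))
    (a : Fin m → EuclideanSpace ℝ (Fin n))
    (t τ : ℝ) (ht0 : 0 < t) (hτ : 0 < τ)
    (hrec : ∀ y : EuclideanSpace ℝ (Fin m),
      ‖(WithLp.equiv 2 (Fin m → ℝ)).symm (fun i => ⟪a i, gradient f x⟫) - y‖ ≤ t →
      ∀ zhat : EuclideanSpace ℝ (Fin n),
        (‖(WithLp.equiv 2 (Fin m → ℝ)).symm (fun i => ⟪a i, zhat⟫) - y‖ ≤ t ∧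
          ∀ z : EuclideanSpace ℝ (Fin n),
            ‖(WithLp.equiv 2 (Fin m → ℝ)).symm (fun i => ⟪a i, z⟫) - y‖ ≤ t →
            ∑ i, |zhat i| ≤ ∑ i, |z i|) →
        ‖zhat - gradient f x‖ ≤ 2 * t / τ)
    (δ C K : ℝ) (hδ : 0 < δ) (hK : 0 ≤ K)
    (hC : ∀ i, |⟪gradient f x, a i⟫| ≤ C)
    (hrem : ∀ Δ : Fin m → ℝ, (∀ j, Δ j = 1 ∨ Δ j = -1) → ∀ i : Fin m,
      abs ((f (x + δ • ∑ j, Δ j • a j) - f x) / (δ * Δ i) -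
          ⟪gradient f x, a i⟫ -
          ∑ j ∈ Finset.univ.erase i, Δ j * Δ i * ⟪gradient f x, a j⟫) ≤ K * δ)
    (ht : 2 * m * K * δ < t) (ε : ℝ) (hε0 : 0 < ε) (hε1 : ε < 1)
    (hk : (k : ℝ) ≥ 8 * (m : ℝ) ^ 2 * ((m : ℝ) - 1) * C ^ 2 / t ^ 2 *
      Real.log (2 / ε)) :
    1 - ε * m ≤
      (({σ : Fin k → Fin m → Bool |
        ∀ gtilde : EuclideanSpace ℝ (Fin n),
          (‖(WithLp.equiv 2 (Fin m → ℝ)).symm (fun i => ⟪a i, gtilde⟫) -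
              (WithLp.equiv 2 (Fin m → ℝ)).symm (fun i =>
                (1 / (k : ℝ)) * ∑ l, (f (x + δ • ∑ j,
                    (if σ l j then (1 : ℝ) else -1) • a j) - f x) /
                  (δ * (if σ l i then (1 : ℝ) else -1)))‖ ≤ t ∧
            ∀ z : EuclideanSpace ℝ (Fin n),
              ‖(WithLp.equiv 2 (Fin m → ℝ)).symm (fun i => ⟪a i, z⟫) -
                (WithLp.equiv 2 (Fin m → ℝ)).symm (fun i =>
                  (1 / (k : ℝ)) * ∑ l, (f (x + δ • ∑ j,
                      (if σ l j then (1 : ℝ) else -1) • a j) - f x) /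
                    (δ * (if σ l i then (1 : ℝ) else -1)))‖ ≤ t →
              ∑ i, |gtilde i| ≤ ∑ i, |z i|) →
          ‖gtilde - gradient f x‖ ≤ 2 * t / τ}.ncard : ℝ) / 2 ^ (k * m)) := by
  classical
  have hmnat : 0 < m := lt_of_lt_of_le two_pos hm
  have hm0 : (0:ℝ) < m := by exact_mod_cast hmnat
  have hm1 : (1:ℝ) ≤ m := by exact_mod_cast hmnat
  have hmne : (m:ℝ) ≠ 0 := ne_of_gt hm0
  have hm2R : (2:ℝ) ≤ (m:ℝ) := by exact_mod_cast hm
  have hKδm : K * δ < t / (2 * m) := by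
    rw [lt_div_iff₀ (by positivity)]
    nlinarith
  have hcardΩ : (Fintype.card (Fin k → Fin m → Bool)) = 2 ^ (k * m) := by
    rw [Fintype.card_fun, Fintype.card_fun, Fintype.card_bool, Fintype.card_fin,
      Fintype.card_fin, ← pow_mul, mul_comm]
  -- the coordinatewise estimate for the averaged measurements
  have hcoord : ∀ (σ : Fin k → Fin m → Bool), 0 < k →
      (∀ i : Fin m, |∑ l, ∑ j ∈ Finset.univ.erase i,
        (if σ l j then (1:ℝ) else -1) * (if σ l i then (1:ℝ) else -1) * ⟪gradient f x, a j⟫|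
        ≤ (k:ℝ) * t / (2 * m)) →
      ∀ i : Fin m,
        |(1 / (k : ℝ)) * ∑ l, (f (x + δ • ∑ j,
            (if σ l j then (1 : ℝ) else -1) • a j) - f x) /
          (δ * (if σ l i then (1 : ℝ) else -1)) - ⟪a i, gradient f x⟫| ≤ t / m := by
    intro σ hk0 hQ i
    have hkR : (0:ℝ) < k := by exact_mod_cast hk0
    have hkne : (k:ℝ) ≠ 0 := ne_of_gt hkR
    have h1 : ∀ l : Fin k,
        |(f (x + δ • ∑ j, (if σ l j then (1 : ℝ) else -1) • a j) - f x) /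
            (δ * (if σ l i then (1 : ℝ) else -1)) - ⟪gradient f x, a i⟫ -
          ∑ j ∈ Finset.univ.erase i,
            (if σ l j then (1:ℝ) else -1) * (if σ l i then (1:ℝ) else -1) *
              ⟪gradient f x, a j⟫| ≤ K * δ := by
      intro l
      have := hrem (fun j => if σ l j then (1:ℝ) else -1)
        (fun j => by by_cases h : σ l j <;> simp [h]) i
      simpa using this
    have h2 : |(∑ l, (f (x + δ • ∑ j, (if σ l j then (1 : ℝ) else -1) • a j) - f x) /
            (δ * (if σ l i then (1 : ℝ) else -1))) - (k:ℝ) * ⟪gradient f x, a i⟫ -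
          ∑ l, ∑ j ∈ Finset.univ.erase i,
            (if σ l j then (1:ℝ) else -1) * (if σ l i then (1:ℝ) else -1) *
              ⟪gradient f x, a j⟫| ≤ (k:ℝ) * (K * δ) := by
      have e : (∑ l, (f (x + δ • ∑ j, (if σ l j then (1 : ℝ) else -1) • a j) - f x) /
            (δ * (if σ l i then (1 : ℝ) else -1))) - (k:ℝ) * ⟪gradient f x, a i⟫ -
          (∑ l, ∑ j ∈ Finset.univ.erase i,
            (if σ l j then (1:ℝ) else -1) * (if σ l i then (1:ℝ) else -1) *
              ⟪gradient f x, a j⟫)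
          = ∑ l, ((f (x + δ • ∑ j, (if σ l j then (1 : ℝ) else -1) • a j) - f x) /
            (δ * (if σ l i then (1 : ℝ) else -1)) - ⟪gradient f x, a i⟫ -
          ∑ j ∈ Finset.univ.erase i,
            (if σ l j then (1:ℝ) else -1) * (if σ l i then (1:ℝ) else -1) *
              ⟪gradient f x, a j⟫) := by
        rw [Finset.sum_sub_distrib, Finset.sum_sub_distrib, Finset.sum_const,
          Finset.card_univ, Fintype.card_fin, nsmul_eq_mul]
      rw [e]
      calc |∑ l, ((f (x + δ • ∑ j, (if σ l j then (1 : ℝ) else -1) • a j) - f x) /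
            (δ * (if σ l i then (1 : ℝ) else -1)) - ⟪gradient f x, a i⟫ -
          ∑ j ∈ Finset.univ.erase i,
            (if σ l j then (1:ℝ) else -1) * (if σ l i then (1:ℝ) else -1) *
              ⟪gradient f x, a j⟫)|
          ≤ ∑ l, |(f (x + δ • ∑ j, (if σ l j then (1 : ℝ) else -1) • a j) - f x) /
            (δ * (if σ l i then (1 : ℝ) else -1)) - ⟪gradient f x, a i⟫ -
          ∑ j ∈ Finset.univ.erase i,
            (if σ l j then (1:ℝ) else -1) * (if σ l i then (1:ℝ) else -1) *
              ⟪gradient f x, a j⟫| := Finset.abs_sum_le_sum_abs _ _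
        _ ≤ ∑ _l : Fin k, K * δ := Finset.sum_le_sum fun l _ => h1 l
        _ = (k:ℝ) * (K * δ) := by
            rw [Finset.sum_const, Finset.card_univ, Fintype.card_fin, nsmul_eq_mul]
    have hsym : ⟪a i, gradient f x⟫ = ⟪gradient f x, a i⟫ := real_inner_comm _ _
    have e2 : (1 / (k : ℝ)) * ∑ l, (f (x + δ • ∑ j,
            (if σ l j then (1 : ℝ) else -1) • a j) - f x) /
          (δ * (if σ l i then (1 : ℝ) else -1)) - ⟪a i, gradient f x⟫
        = (1/(k:ℝ)) * (((∑ l, (f (x + δ • ∑ j, (if σ l j then (1 : ℝ) else -1) • a j) - f x) /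
            (δ * (if σ l i then (1 : ℝ) else -1))) - (k:ℝ) * ⟪gradient f x, a i⟫ -
          ∑ l, ∑ j ∈ Finset.univ.erase i,
            (if σ l j then (1:ℝ) else -1) * (if σ l i then (1:ℝ) else -1) *
              ⟪gradient f x, a j⟫) +
          ∑ l, ∑ j ∈ Finset.univ.erase i,
            (if σ l j then (1:ℝ) else -1) * (if σ l i then (1:ℝ) else -1) *
              ⟪gradient f x, a j⟫) := by
      rw [hsym]
      field_simp
      try ring
    rw [e2, abs_mul, abs_of_nonneg (by positivity : (0:ℝ) ≤ 1/(k:ℝ))]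
    have h3 := (abs_add_le _ _).trans (add_le_add h2 (hQ i))
    calc (1/(k:ℝ)) * |(((∑ l, (f (x + δ • ∑ j, (if σ l j then (1 : ℝ) else -1) • a j) - f x) /
            (δ * (if σ l i then (1 : ℝ) else -1))) - (k:ℝ) * ⟪gradient f x, a i⟫ -
          ∑ l, ∑ j ∈ Finset.univ.erase i,
            (if σ l j then (1:ℝ) else -1) * (if σ l i then (1:ℝ) else -1) *
              ⟪gradient f x, a j⟫) +
          ∑ l, ∑ j ∈ Finset.univ.erase i,
            (if σ l j then (1:ℝ) else -1) * (if σ l i then (1:ℝ) else -1) *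
              ⟪gradient f x, a j⟫)|
        ≤ (1/(k:ℝ)) * ((k:ℝ) * (K * δ) + (k:ℝ) * t / (2 * m)) :=
          mul_le_mul_of_nonneg_left h3 (by positivity)
      _ = K * δ + t / (2 * m) := by field_simp
      _ ≤ t / (2 * m) + t / (2 * m) := by linarith
      _ = t / m := by field_simp; ring
  -- membership criterion
  have hmemS : ∀ σ : Fin k → Fin m → Bool,
      (∀ i : Fin m,
        |(1 / (k : ℝ)) * ∑ l, (f (x + δ • ∑ j,
            (if σ l j then (1 : ℝ) else -1) • a j) - f x) /
          (δ * (if σ l i then (1 : ℝ) else -1)) - ⟪a i, gradient f x⟫| ≤ t / m) →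
      σ ∈ {σ : Fin k → Fin m → Bool |
        ∀ gtilde : EuclideanSpace ℝ (Fin n),
          (‖(WithLp.equiv 2 (Fin m → ℝ)).symm (fun i => ⟪a i, gtilde⟫) -
              (WithLp.equiv 2 (Fin m → ℝ)).symm (fun i =>
                (1 / (k : ℝ)) * ∑ l, (f (x + δ • ∑ j,
                    (if σ l j then (1 : ℝ) else -1) • a j) - f x) /
                  (δ * (if σ l i then (1 : ℝ) else -1)))‖ ≤ t ∧
            ∀ z : EuclideanSpace ℝ (Fin n),
              ‖(WithLp.equiv 2 (Fin m → ℝ)).symm (fun i => ⟪a i, z⟫) -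
                (WithLp.equiv 2 (Fin m → ℝ)).symm (fun i =>
                  (1 / (k : ℝ)) * ∑ l, (f (x + δ • ∑ j,
                      (if σ l j then (1 : ℝ) else -1) • a j) - f x) /
                    (δ * (if σ l i then (1 : ℝ) else -1)))‖ ≤ t →
              ∑ i, |gtilde i| ≤ ∑ i, |z i|) →
          ‖gtilde - gradient f x‖ ≤ 2 * t / τ} := by
    intro σ hb
    have hn : ‖(WithLp.equiv 2 (Fin m → ℝ)).symm (fun i => ⟪a i, gradient f x⟫) -
        (WithLp.equiv 2 (Fin m → ℝ)).symm (fun i =>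
          (1 / (k : ℝ)) * ∑ l, (f (x + δ • ∑ j,
              (if σ l j then (1 : ℝ) else -1) • a j) - f x) /
            (δ * (if σ l i then (1 : ℝ) else -1)))‖ ≤ t := by
      apply norm_le_of_coord hm _ _ t ht0
      intro i
      rw [abs_sub_comm]
      exact hb i
    exact fun gtilde hg => hrec _ hn gtilde hg
  have hC0 : 0 ≤ C := le_trans (abs_nonneg _) (hC ⟨0, hmnat⟩)
  rcases eq_or_lt_of_le hC0 with hCeq | hCpos
  · -- C = 0 : every σ works
    have hg0 : ∀ j, ⟪gradient f x, a j⟫ = (0:ℝ) := by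
      intro j
      have := hC j
      rw [← hCeq] at this
      exact abs_eq_zero.1 (le_antisymm this (abs_nonneg _))
    have hall : ∀ σ : Fin k → Fin m → Bool, ∀ i : Fin m,
        |(1 / (k : ℝ)) * ∑ l, (f (x + δ • ∑ j,
            (if σ l j then (1 : ℝ) else -1) • a j) - f x) /
          (δ * (if σ l i then (1 : ℝ) else -1)) - ⟪a i, gradient f x⟫| ≤ t / m := by
      intro σ i
      rcases Nat.eq_zero_or_pos k with hk0 | hk0
      · subst hk0
        have hsym : ⟪a i, gradient f x⟫ = ⟪gradient f x, a i⟫ := real_inner_comm _ _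
        rw [hsym, hg0]
        simp only [Finset.univ_eq_empty, Finset.sum_empty, mul_zero, sub_zero, abs_zero,
          Nat.cast_zero]
        positivity
      · apply hcoord σ hk0 _ i
        intro i'
        have : ∀ l : Fin k, ∑ j ∈ Finset.univ.erase i',
            (if σ l j then (1:ℝ) else -1) * (if σ l i' then (1:ℝ) else -1) *
              ⟪gradient f x, a j⟫ = 0 := by
          intro l
          apply Finset.sum_eq_zero
          intro j _
          rw [hg0 j, mul_zero]
        simp only [this, Finset.sum_const_zero, abs_zero]
        positivity
    have hSuniv : {σ : Fin k → Fin m → Bool |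
        ∀ gtilde : EuclideanSpace ℝ (Fin n),
          (‖(WithLp.equiv 2 (Fin m → ℝ)).symm (fun i => ⟪a i, gtilde⟫) -
              (WithLp.equiv 2 (Fin m → ℝ)).symm (fun i =>
                (1 / (k : ℝ)) * ∑ l, (f (x + δ • ∑ j,
                    (if σ l j then (1 : ℝ) else -1) • a j) - f x) /
                  (δ * (if σ l i then (1 : ℝ) else -1)))‖ ≤ t ∧
            ∀ z : EuclideanSpace ℝ (Fin n),
              ‖(WithLp.equiv 2 (Fin m → ℝ)).symm (fun i => ⟪a i, z⟫) -
                (WithLp.equiv 2 (Fin m → ℝ)).symm (fun i =>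
                  (1 / (k : ℝ)) * ∑ l, (f (x + δ • ∑ j,
                      (if σ l j then (1 : ℝ) else -1) • a j) - f x) /
                    (δ * (if σ l i then (1 : ℝ) else -1)))‖ ≤ t →
              ∑ i, |gtilde i| ≤ ∑ i, |z i|) →
          ‖gtilde - gradient f x‖ ≤ 2 * t / τ} = Set.univ :=
      Set.eq_univ_of_forall (fun σ => hmemS σ (hall σ))
    rw [hSuniv, Set.ncard_univ, Nat.card_eq_fintype_card, hcardΩ]
    push_cast
    rw [div_self (by positivity)]
    nlinarith
  · -- C > 0 : use the counting lemma
    have hL0 : 0 < Real.log (2 / ε) := Real.log_pos (by rw [lt_div_iff₀ hε0]; linarith)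
    have hk1 : 1 ≤ k := by
      by_contra h
      push_neg at h
      interval_cases k
      · have hpos : (0:ℝ) < 8 * (m : ℝ) ^ 2 * ((m : ℝ) - 1) * C ^ 2 / t ^ 2 *
          Real.log (2 / ε) := by
          have hmm : (0:ℝ) < (m:ℝ) - 1 := by linarith
          positivity
        have hk' : (0:ℝ) ≥ 8 * (m : ℝ) ^ 2 * ((m : ℝ) - 1) * C ^ 2 / t ^ 2 *
          Real.log (2 / ε) := by exact_mod_cast hk
        linarith
    have hcg := count_good hm hk1 (fun j => ⟪gradient f x, a j⟫) C t ε hC hCpos ht0 hε0 hε1 hk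
    have hsub : (↑(Finset.univ.filter fun σ : Fin k → Fin m → Bool =>
        ∀ i, |∑ l, ∑ j ∈ Finset.univ.erase i,
          (if σ l j then (1:ℝ) else -1) * (if σ l i then (1:ℝ) else -1) *
            ⟪gradient f x, a j⟫|
          ≤ (k:ℝ) * t / (2 * m)) : Set (Fin k → Fin m → Bool)) ⊆
      {σ : Fin k → Fin m → Bool |
        ∀ gtilde : EuclideanSpace ℝ (Fin n),
          (‖(WithLp.equiv 2 (Fin m → ℝ)).symm (fun i => ⟪a i, gtilde⟫) -
              (WithLp.equiv 2 (Fin m → ℝ)).symm (fun i =>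
                (1 / (k : ℝ)) * ∑ l, (f (x + δ • ∑ j,
                    (if σ l j then (1 : ℝ) else -1) • a j) - f x) /
                  (δ * (if σ l i then (1 : ℝ) else -1)))‖ ≤ t ∧
            ∀ z : EuclideanSpace ℝ (Fin n),
              ‖(WithLp.equiv 2 (Fin m → ℝ)).symm (fun i => ⟪a i, z⟫) -
                (WithLp.equiv 2 (Fin m → ℝ)).symm (fun i =>
                  (1 / (k : ℝ)) * ∑ l, (f (x + δ • ∑ j,
                      (if σ l j then (1 : ℝ) else -1) • a j) - f x) /
                    (δ * (if σ l i then (1 : ℝ) else -1)))‖ ≤ t →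
              ∑ i, |gtilde i| ≤ ∑ i, |z i|) →
          ‖gtilde - gradient f x‖ ≤ 2 * t / τ} := by
      intro σ hσ
      simp only [Finset.coe_filter, Set.mem_setOf_eq, Finset.mem_univ, true_and] at hσ
      exact hmemS σ (hcoord σ hk1 hσ)
    have h5 := Set.ncard_le_ncard hsub (Set.toFinite _)
    rw [Set.ncard_coe_finset] at h5
    rw [le_div_iff₀ (by positivity : (0:ℝ) < 2 ^ (k * m))]
    calc (1 - ε * m) * 2 ^ (k * m)
        ≤ ((Finset.univ.filter fun σ : Fin k → Fin m → Bool =>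
          ∀ i, |∑ l, ∑ j ∈ Finset.univ.erase i,
            (if σ l j then (1:ℝ) else -1) * (if σ l i then (1:ℝ) else -1) *
              ⟪gradient f x, a j⟫|
            ≤ (k:ℝ) * t / (2 * m)).card : ℝ) := hcg
      _ ≤ _ := by exact_mod_cast h5
end
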